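/- For every permutation A of [k] with k ≥ 2 there exists an A-avoiding permuton Γ such that for a disintegration {Γ_x} along the first coordinate, almost every fiber Γ_x is supported on exactly k−1 atoms (and not fewer). -/

import Mathlib

open MeasureTheory Set

/-- Geometric representations of the pattern `A`. -/
def patternSet {k : ℕ} (A : Equiv.Perm (Fin k)) : Set (Fin k → ℝ × ℝ) :=
  {f | StrictMono (fun i => (f i).1) ∧ ∀ i j : Fin k, A i < A j ↔ (f i).2 < (f j).2}

open scoped ENNReal

noncomputable section

/-- direction of the pair (j, j+1) in the pattern A: true iff value j occurs before value j+1 -/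
def dd (n : ℕ) (A : Equiv.Perm (Fin (n+1))) (j : Fin n) : Prop :=
  A.symm j.castSucc < A.symm j.succ

instance (n : ℕ) (A : Equiv.Perm (Fin (n+1))) (j : Fin n) : Decidable (dd n A j) := by
  unfold dd; infer_instance

/-- the j-th curve -/
def yj (n : ℕ) (A : Equiv.Perm (Fin (n+1))) (j : Fin n) (x : ℝ) : ℝ :=
  ((j : ℝ) + if dd n A j then 1 - x else x) / n

lemma yj_cont (n : ℕ) (A : Equiv.Perm (Fin (n+1))) (j : Fin n) : Continuous (yj n A j) := by
  unfold yj
  by_cases h : dd n A j <;> simp only [h, if_true, if_false] <;> fun_prop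

lemma yj_meas (n : ℕ) (A : Equiv.Perm (Fin (n+1))) (j : Fin n) :
    Measurable fun x => (x, yj n A j x) :=
  measurable_id.prodMk (yj_cont n A j).measurable

lemma yj_mem_band {n : ℕ} (hn : 0 < n) (A : Equiv.Perm (Fin (n+1))) (j : Fin n) {x : ℝ}
    (hx : x ∈ Ioo (0:ℝ) 1) : yj n A j x ∈ Ioo ((j:ℝ)/n) (((j:ℝ)+1)/n) := by
  have hn' : (0:ℝ) < n := by exact_mod_cast hn
  obtain ⟨h0, h1⟩ := hx
  unfold yj
  have hg : (0:ℝ) < (if dd n A j then 1 - x else x) ∧ (if dd n A j then 1 - x else x) < 1 := by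
    split_ifs <;> constructor <;> linarith
  constructor <;> gcongr <;> linarith [hg.1, hg.2]

lemma yj_mem_band_iff {n : ℕ} (hn : 0 < n) (A : Equiv.Perm (Fin (n+1))) (j : Fin n) {x : ℝ} :
    x ∈ Ioo (0:ℝ) 1 ↔ yj n A j x ∈ Ioo ((j:ℝ)/n) (((j:ℝ)+1)/n) := by
  have hn' : (0:ℝ) < n := by exact_mod_cast hn
  refine ⟨yj_mem_band hn A j, fun h => ?_⟩
  obtain ⟨h0, h1⟩ := h
  unfold yj at h0 h1
  rw [div_lt_div_iff_of_pos_right hn'] at h0 h1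
  constructor <;> [skip; skip] <;> split_ifs at h0 h1 <;> linarith

lemma yj_strict {n : ℕ} (hn : 0 < n) (A : Equiv.Perm (Fin (n+1))) {j j' : Fin n} (h : j < j')
    {x x' : ℝ} (hx : x ∈ Ioo (0:ℝ) 1) (hx' : x' ∈ Ioo (0:ℝ) 1) :
    yj n A j x < yj n A j' x' := by
  have hn' : (0:ℝ) < n := by exact_mod_cast hn
  have b1 := (yj_mem_band hn A j hx).2
  have b2 := (yj_mem_band hn A j' hx').1
  have hj : ((j:ℝ) + 1) ≤ (j' : ℝ) := by exact_mod_cast h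
  have : ((j:ℝ)+1)/n ≤ (j':ℝ)/n := by gcongr
  linarith

/-- the permuton -/
def Gam (n : ℕ) (A : Equiv.Perm (Fin (n+1))) : Measure (ℝ × ℝ) :=
  ((n : ℝ≥0∞))⁻¹ • ∑ j : Fin n,
    Measure.map (fun x => (x, yj n A j x)) (volume.restrict (Ioo 0 1))

/-- the disintegration kernel -/
def Gx (n : ℕ) (A : Equiv.Perm (Fin (n+1))) (x : ℝ) : Measure ℝ :=
  ((n : ℝ≥0∞))⁻¹ • ∑ j : Fin n, Measure.dirac (yj n A j x)

lemma Gam_apply {n : ℕ} (A : Equiv.Perm (Fin (n+1))) {B : Set (ℝ × ℝ)} (hB : MeasurableSet B) :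
    Gam n A B = ((n : ℝ≥0∞))⁻¹ * ∑ j : Fin n,
      volume ({x | (x, yj n A j x) ∈ B} ∩ Ioo 0 1) := by
  simp only [Gam, Measure.smul_apply, Measure.finset_sum_apply, smul_eq_mul]
  congr 1
  refine Finset.sum_congr rfl fun j _ => ?_
  rw [Measure.map_apply (yj_meas n A j) hB, Measure.restrict_apply]
  · rfl
  · exact (yj_meas n A j) hB

lemma Gam_prob {n : ℕ} (hn : 0 < n) (A : Equiv.Perm (Fin (n+1))) :
    IsProbabilityMeasure (Gam n A) := by
  constructor
  rw [Gam_apply A MeasurableSet.univ]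
  simp only [mem_univ, setOf_true, univ_inter, Real.volume_Ioo]
  norm_num
  exact ENNReal.inv_mul_cancel (by exact_mod_cast hn.ne') (ENNReal.natCast_ne_top n)

lemma vol_Ioo_eq_Icc (B : Set ℝ) : volume (B ∩ Ioo (0:ℝ) 1) = volume (B ∩ Icc 0 1) :=
  measure_congr (Filter.EventuallyEq.inter (Filter.EventuallyEq.rfl) Ioo_ae_eq_Icc)

lemma Gam_marg1 {n : ℕ} (hn : 0 < n) (A : Equiv.Perm (Fin (n+1))) {B : Set ℝ}
    (hB : MeasurableSet B) : Gam n A (B ×ˢ univ) = volume (B ∩ Icc 0 1) := by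
  rw [Gam_apply A (hB.prod MeasurableSet.univ)]
  have : ∀ j : Fin n, {x | (x, yj n A j x) ∈ B ×ˢ univ} = B := by
    intro j; ext x; simp
  simp only [this, Finset.sum_const, Finset.card_univ, Fintype.card_fin, nsmul_eq_mul]
  rw [← mul_assoc, ENNReal.inv_mul_cancel (by exact_mod_cast hn.ne') (ENNReal.natCast_ne_top n),
    one_mul, vol_Ioo_eq_Icc]

lemma affine_preimage_vol (a b : ℝ) (ha : a ≠ 0) (S : Set ℝ) :
    volume ((fun x => b + a * x) ⁻¹' S) = ENNReal.ofReal |a⁻¹| * volume S := by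
  have : (fun x : ℝ => b + a * x) = (fun y => b + y) ∘ (fun x => a * x) := rfl
  rw [this, Set.preimage_comp, Real.volume_preimage_mul_left ha, measure_preimage_add]

lemma curve_preimage_vol {n : ℕ} (hn : 0 < n) (A : Equiv.Perm (Fin (n+1))) (j : Fin n)
    (B : Set ℝ) :
    volume ({x | yj n A j x ∈ B} ∩ Ioo 0 1) =
      (n : ℝ≥0∞) * volume (B ∩ Ioo ((j:ℝ)/n) (((j:ℝ)+1)/n)) := by
  have hn' : (0:ℝ) < n := by exact_mod_cast hn
  have hset : {x | yj n A j x ∈ B} ∩ Ioo 0 1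
      = yj n A j ⁻¹' (B ∩ Ioo ((j:ℝ)/n) (((j:ℝ)+1)/n)) := by
    ext x
    simp only [mem_inter_iff, mem_setOf_eq, mem_preimage]
    exact and_congr_right fun _ => yj_mem_band_iff hn A j
  rw [hset]
  have hofn : ENNReal.ofReal |((n:ℝ))| = (n : ℝ≥0∞) := by
    rw [abs_of_pos hn', ENNReal.ofReal_natCast]
  by_cases h : dd n A j
  · have hfun : yj n A j = fun x => (((j:ℝ)+1)/n) + (-(1:ℝ)/n) * x := by
      funext x; simp only [yj, if_pos h]; field_simp; try ring
    have ha : (-(1:ℝ)/n) ≠ 0 := by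
      simp only [ne_eq, div_eq_zero_iff, neg_eq_zero, one_ne_zero, false_or]; exact hn'.ne'
    have hinv : ((-(1:ℝ))/n)⁻¹ = -(n:ℝ) := by field_simp
    rw [hfun, affine_preimage_vol _ _ ha, hinv, abs_neg, hofn]
  · have hfun : yj n A j = fun x => ((j:ℝ)/n) + ((1:ℝ)/n) * x := by
      funext x; simp only [yj, if_neg h]; field_simp; try ring
    have ha : ((1:ℝ)/n) ≠ 0 := by positivity
    have hinv : ((1:ℝ)/n)⁻¹ = (n:ℝ) := by field_simp
    rw [hfun, affine_preimage_vol _ _ ha, hinv, hofn]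

lemma bands_cover {n : ℕ} (hn : 0 < n) (B : Set ℝ) (hB : MeasurableSet B) :
    ∑ j : Fin n, volume (B ∩ Ioo ((j:ℝ)/n) (((j:ℝ)+1)/n)) = volume (B ∩ Icc 0 1) := by
  have hn' : (0:ℝ) < n := by exact_mod_cast hn
  set I : Fin n → Set ℝ := fun j => Ioo ((j:ℝ)/n) (((j:ℝ)+1)/n) with hI
  have hImeas : ∀ j, MeasurableSet (B ∩ I j) := fun j => hB.inter measurableSet_Ioo
  have key : ∀ j j' : Fin n, j < j' → Disjoint (B ∩ I j) (B ∩ I j') := by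
    intro j j' h
    refine Set.disjoint_left.2 fun x hx hx' => ?_
    have h1 : x < ((j:ℝ)+1)/n := hx.2.2
    have h2 : ((j':ℝ))/n < x := hx'.2.1
    have hj : ((j:ℝ) + 1) ≤ (j' : ℝ) := by exact_mod_cast h
    have : ((j:ℝ)+1)/n ≤ (j':ℝ)/n := by gcongr
    linarith
  have hdisj : Pairwise (Function.onFun Disjoint fun j => B ∩ I j) := by
    intro j j' hne
    rcases hne.lt_or_gt with h | h
    · exact key j j' h
    · exact (key j' j h).symm
  have hunion : volume (⋃ j, B ∩ I j) = ∑ j : Fin n, volume (B ∩ I j) := by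
    rw [measure_iUnion hdisj hImeas, tsum_fintype]
  rw [← hunion]
  -- the union is B ∩ Icc 0 1 minus a finite set
  set F : Set ℝ := (fun i : ℕ => (i:ℝ)/n) '' {i | i ≤ n} with hF
  have hFnull : volume F = 0 := by
    apply Set.Finite.measure_zero
    exact Set.Finite.image _ (Set.finite_Iic n)
  have hsub : ⋃ j, B ∩ I j ⊆ B ∩ Icc 0 1 := by
    refine iUnion_subset fun j => inter_subset_inter_right _ ?_
    intro x hx
    have h1 : (0:ℝ) ≤ (j:ℝ)/n := by positivity
    have h2 : ((j:ℝ)+1)/n ≤ 1 := by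
      rw [div_le_one hn']
      have : (j:ℕ) + 1 ≤ n := j.2
      exact_mod_cast this
    exact ⟨le_of_lt (lt_of_le_of_lt h1 hx.1), le_of_lt (lt_of_lt_of_le hx.2 h2)⟩
  have hcov : B ∩ Icc 0 1 ⊆ (⋃ j, B ∩ I j) ∪ F := by
    rintro x ⟨hxB, hx0, hx1⟩
    by_cases hx1' : x = 1
    · right
      refine ⟨n, le_refl n, ?_⟩
      show (n:ℝ)/n = x
      rw [hx1', div_self hn'.ne']
    have hxlt : x < 1 := lt_of_le_of_ne hx1 hx1'
    set i : ℕ := ⌊x * n⌋₊ with hi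
    have hxn0 : 0 ≤ x * n := by positivity
    have hile : (i:ℝ) ≤ x * n := Nat.floor_le hxn0
    have hilt : x * n < (i:ℝ) + 1 := Nat.lt_floor_add_one _
    have hiltn : i < n := by
      have : x * n < n := by nlinarith
      have := Nat.floor_lt hxn0 |>.2 (by exact_mod_cast this)
      exact_mod_cast this
    by_cases heq : (i:ℝ) = x * n
    · right
      refine ⟨i, le_of_lt hiltn, ?_⟩
      show (i:ℝ)/n = x
      rw [div_eq_iff hn'.ne']
      linarith
    · left
      refine mem_iUnion.2 ⟨⟨i, hiltn⟩, hxB, ?_, ?_⟩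
      · show ((⟨i, hiltn⟩ : Fin n) : ℝ)/n < x
        rw [div_lt_iff₀ hn']
        push_cast
        exact lt_of_le_of_ne hile heq
      · show x < (((⟨i, hiltn⟩ : Fin n) : ℝ)+1)/n
        rw [lt_div_iff₀ hn']
        push_cast
        linarith
  refine le_antisymm (measure_mono hsub) ?_
  calc volume (B ∩ Icc 0 1) ≤ volume ((⋃ j, B ∩ I j) ∪ F) := measure_mono hcov
  _ ≤ volume (⋃ j, B ∩ I j) + volume F := measure_union_le _ _
  _ = volume (⋃ j, B ∩ I j) := by rw [hFnull, add_zero]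

lemma Gam_marg2 {n : ℕ} (hn : 0 < n) (A : Equiv.Perm (Fin (n+1))) {B : Set ℝ}
    (hB : MeasurableSet B) : Gam n A (univ ×ˢ B) = volume (B ∩ Icc 0 1) := by
  rw [Gam_apply A (MeasurableSet.univ.prod hB)]
  have hre : ∀ j : Fin n, {x | (x, yj n A j x) ∈ univ ×ˢ B} = {x | yj n A j x ∈ B} := by
    intro j; ext x; simp
  simp only [hre]
  have : ∀ j : Fin n, volume ({x | yj n A j x ∈ B} ∩ Ioo 0 1)
      = (n : ℝ≥0∞) * volume (B ∩ Ioo ((j:ℝ)/n) (((j:ℝ)+1)/n)) :=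
    fun j => curve_preimage_vol hn A j B
  simp only [this]
  rw [← Finset.mul_sum, ← mul_assoc,
    ENNReal.inv_mul_cancel (by exact_mod_cast hn.ne') (ENNReal.natCast_ne_top n), one_mul]
  exact bands_cover hn B hB

lemma ivt_discrete (c : ℕ → ℤ) : ∀ m : ℕ, c 0 ≤ 0 → 1 ≤ c m →
    (∀ v, v < m → c (v+1) ≤ c v + 1) → ∃ u, u < m ∧ c u = 0 ∧ c (u+1) = 1 := by
  intro m
  induction m with
  | zero => intro h0 h1 _; omega
  | succ m ih =>
    intro h0 h1 hstep
    by_cases hm : 1 ≤ c m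
    · obtain ⟨u, hu, h⟩ := ih h0 hm (fun v hv => hstep v (by omega))
      exact ⟨u, by omega, h⟩
    · have := hstep m (by omega)
      exact ⟨m, by omega, by omega, by omega⟩

/-- the support of the permuton -/
def supC (n : ℕ) (A : Equiv.Perm (Fin (n+1))) : Set (ℝ × ℝ) :=
  ⋃ j : Fin n, {p : ℝ × ℝ | p.1 ∈ Ioo (0:ℝ) 1 ∧ p.2 = yj n A j p.1}

lemma supC_meas (n : ℕ) (A : Equiv.Perm (Fin (n+1))) : MeasurableSet (supC n A) := by
  refine MeasurableSet.iUnion fun j => ?_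
  have : {p : ℝ × ℝ | p.1 ∈ Ioo (0:ℝ) 1 ∧ p.2 = yj n A j p.1}
      = (Ioo (0:ℝ) 1 ×ˢ univ) ∩ {p : ℝ × ℝ | p.2 = yj n A j p.1} := by
    ext p; simp [mem_prod]
  rw [this]
  exact (measurableSet_Ioo.prod MeasurableSet.univ).inter
    (isClosed_eq continuous_snd ((yj_cont n A j).comp continuous_fst)).measurableSet

lemma Gam_compl_supC {n : ℕ} (A : Equiv.Perm (Fin (n+1))) : Gam n A (supC n A)ᶜ = 0 := by
  rw [Gam_apply A (supC_meas n A).compl]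
  have : ∀ j : Fin n, {x | (x, yj n A j x) ∈ (supC n A)ᶜ} ∩ Ioo 0 1 = ∅ := by
    intro j
    refine eq_empty_of_forall_notMem fun x hx => ?_
    exact hx.1 (mem_iUnion.2 ⟨j, hx.2, rfl⟩)
  have h2 : ∀ j : Fin n, volume ({x | (x, yj n A j x) ∉ supC n A} ∩ Ioo 0 1) = 0 := by
    intro j
    have := this j
    rw [show {x | (x, yj n A j x) ∉ supC n A} = {x | (x, yj n A j x) ∈ (supC n A)ᶜ} from rfl, this]
    simp
  simp [h2]

/-- The combinatorial heart: no k points of the support realize the pattern A. -/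
lemma comb_core {n : ℕ} (hn : 0 < n) (A : Equiv.Perm (Fin (n+1)))
    (f : Fin (n+1) → ℝ × ℝ) (hC : ∀ i, f i ∈ supC n A)
    (hmono : StrictMono fun i => (f i).1)
    (horder : ∀ i j : Fin (n+1), A i < A j ↔ (f i).2 < (f j).2) : False := by
  have hn' : (0:ℝ) < n := by exact_mod_cast hn
  -- extract curve indices
  have hC' : ∀ i, ∃ j : Fin n, (f i).1 ∈ Ioo (0:ℝ) 1 ∧ (f i).2 = yj n A j (f i).1 := by
    intro i
    obtain ⟨j, hj⟩ := mem_iUnion.1 (hC i)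
    exact ⟨j, hj.1, hj.2⟩
  choose J0 hx hy using hC'
  -- band assignment of each value
  set g : Fin (n+1) → Fin n := fun v => J0 (A.symm v) with hg
  have ymono : ∀ v w : Fin (n+1), v < w → (f (A.symm v)).2 < (f (A.symm w)).2 := by
    intro v w hvw
    rw [← horder]
    simpa using hvw
  have Jmono : ∀ v w : Fin (n+1), v < w → (g v : ℕ) ≤ (g w : ℕ) := by
    intro v w hvw
    by_contra hcon
    push_neg at hcon
    have hlt : g w < g v := hcon
    have := yj_strict hn A hlt (hx (A.symm w)) (hx (A.symm v))
    rw [← hy, ← hy] at this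
    exact absurd (ymono v w hvw) (not_lt.2 this.le)
  -- discrete IVT
  set gn : ℕ → ℕ := fun v => if h : v < n+1 then (g ⟨v, h⟩ : ℕ) else 0 with hgn
  set c : ℕ → ℤ := fun v => (v : ℤ) - (gn v : ℤ) with hc
  have h0 : c 0 ≤ 0 := by simp [hc]
  have h1 : 1 ≤ c n := by
    have : gn n = (g ⟨n, by omega⟩ : ℕ) := by simp [hgn]
    have hb : (g ⟨n, by omega⟩ : ℕ) < n := (g _).2
    simp only [hc, this]
    omega
  have hstep : ∀ v, v < n → c (v+1) ≤ c v + 1 := by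
    intro v hv
    have hv1 : v < n + 1 := by omega
    have hv2 : v + 1 < n + 1 := by omega
    have := Jmono ⟨v, hv1⟩ ⟨v+1, hv2⟩ (by simp [Fin.mk_lt_mk])
    simp only [hc, hgn, dif_pos hv1, dif_pos hv2]
    omega
  obtain ⟨u, hu, hcu, hcu1⟩ := ivt_discrete c n h0 h1 hstep
  have hu1 : u < n + 1 := by omega
  have hu2 : u + 1 < n + 1 := by omega
  have hgu : (g ⟨u, hu1⟩ : ℕ) = u := by
    simp only [hc, hgn, dif_pos hu1] at hcu; omega
  have hgu1 : (g ⟨u+1, hu2⟩ : ℕ) = u := by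
    simp only [hc, hgn, dif_pos hu2] at hcu1; omega
  -- the colliding band
  set j : Fin n := g ⟨u, hu1⟩ with hj
  have hjval : (j : ℕ) = u := hgu
  have hjeq : g ⟨u+1, hu2⟩ = j := Fin.ext (by rw [hgu1, hjval])
  set i : Fin (n+1) := A.symm ⟨u, hu1⟩ with hi
  set i' : Fin (n+1) := A.symm ⟨u+1, hu2⟩ with hi'
  have hyy : (f i).2 < (f i').2 := ymono _ _ (by simp [Fin.mk_lt_mk])
  have hfy : (f i).2 = yj n A j (f i).1 := hy i
  have hfy' : (f i').2 = yj n A j (f i').1 := by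
    have : J0 i' = j := hjeq
    rw [hy i', this]
  rw [hfy, hfy'] at hyy
  unfold yj at hyy
  rw [div_lt_div_iff_of_pos_right hn', add_lt_add_iff_left] at hyy
  have hcs : j.castSucc = (⟨u, hu1⟩ : Fin (n+1)) := Fin.ext (by simp [hjval])
  have hsc : j.succ = (⟨u+1, hu2⟩ : Fin (n+1)) := Fin.ext (by simp [hjval])
  by_cases hd : dd n A j
  · rw [if_pos hd, if_pos hd] at hyy
    have hxx : (f i').1 < (f i).1 := by linarith
    have : i' < i := hmono.lt_iff_lt.1 hxx
    have hdd : i < i' := by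
      have := hd
      unfold dd at this
      rwa [hcs, hsc] at this
    exact absurd hdd (not_lt.2 this.le)
  · rw [if_neg hd, if_neg hd] at hyy
    have : i < i' := hmono.lt_iff_lt.1 hyy
    exact hd (by unfold dd; rwa [hcs, hsc])

lemma Gam_avoid {n : ℕ} (hn : 0 < n) (A : Equiv.Perm (Fin (n+1))) :
    Measure.pi (fun _ : Fin (n+1) => Gam n A) (patternSet A) = 0 := by
  haveI := Gam_prob hn A
  have hsub : patternSet A ⊆ ⋃ i : Fin (n+1), Function.eval i ⁻¹' ((supC n A)ᶜ) := by
    intro f hf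
    by_contra hcon
    simp only [mem_iUnion, mem_preimage, Function.eval, not_exists, mem_compl_iff,
      not_not] at hcon
    exact comb_core hn A f hcon hf.1 hf.2
  refine le_antisymm ?_ zero_le
  calc Measure.pi (fun _ : Fin (n+1) => Gam n A) (patternSet A)
      ≤ Measure.pi (fun _ : Fin (n+1) => Gam n A)
        (⋃ i : Fin (n+1), Function.eval i ⁻¹' ((supC n A)ᶜ)) := measure_mono hsub
  _ ≤ ∑' i : Fin (n+1), Measure.pi (fun _ : Fin (n+1) => Gam n A)
        (Function.eval i ⁻¹' ((supC n A)ᶜ)) := measure_iUnion_le _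
  _ = 0 := by
      refine ENNReal.tsum_eq_zero.2 fun i => ?_
      exact Measure.pi_eval_preimage_null _ (Gam_compl_supC A)

lemma Gx_meas (n : ℕ) (A : Equiv.Perm (Fin (n+1))) : Measurable (Gx n A) := by
  apply Measure.measurable_of_measurable_coe
  intro s hs
  have : (fun x => Gx n A x s) = fun x => (n : ℝ≥0∞)⁻¹ *
      ∑ j : Fin n, (yj n A j ⁻¹' s).indicator (1 : ℝ → ℝ≥0∞) x := by
    funext x
    simp only [Gx, Measure.smul_apply, Measure.finset_sum_apply, smul_eq_mul,
      Measure.dirac_apply' _ hs]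
    congr 1
  rw [this]
  exact (Finset.measurable_sum _ fun j _ =>
    measurable_const.indicator ((yj_cont n A j).measurable hs)).const_mul _

lemma Gam_disint {n : ℕ} (hn : 0 < n) (A : Equiv.Perm (Fin (n+1))) (B : Set (ℝ × ℝ))
    (hB : MeasurableSet B) :
    Gam n A B = ∫⁻ x in Icc (0:ℝ) 1, Gx n A x {y | (x, y) ∈ B} := by
  have hsec : ∀ x : ℝ, MeasurableSet {y | (x, y) ∈ B} := fun x => measurable_prodMk_left hB
  have hEj : ∀ j : Fin n, MeasurableSet {x | (x, yj n A j x) ∈ B} := fun j => yj_meas n A j hB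
  have hint : ∀ x : ℝ, Gx n A x {y | (x, y) ∈ B} = (n : ℝ≥0∞)⁻¹ *
      ∑ j : Fin n, ({x' | (x', yj n A j x') ∈ B}).indicator (1 : ℝ → ℝ≥0∞) x := by
    intro x
    simp only [Gx, Measure.smul_apply, Measure.finset_sum_apply, smul_eq_mul,
      Measure.dirac_apply' _ (hsec x)]
    congr 1
  rw [← setLIntegral_congr (Ioo_ae_eq_Icc (a := (0:ℝ)) (b := 1))]
  simp only [hint]
  rw [lintegral_const_mul' _ _ (ENNReal.inv_ne_top.2 (by exact_mod_cast hn.ne'))]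
  rw [lintegral_finset_sum (f := fun (j : Fin n) (a : ℝ) =>
    ({x | (x, yj n A j x) ∈ B}).indicator (1 : ℝ → ℝ≥0∞) a) _
    (fun j _ => measurable_const.indicator (hEj j))]
  rw [Gam_apply A hB]
  congr 1
  refine Finset.sum_congr rfl fun j _ => ?_
  rw [lintegral_indicator_one (hEj j), Measure.restrict_apply (hEj j)]

lemma fiber_atoms {n : ℕ} (hn : 0 < n) (A : Equiv.Perm (Fin (n+1))) {x : ℝ}
    (hx : x ∈ Ioo (0:ℝ) 1) :
    ∃ P : Finset ℝ, P.card = n ∧ Gx n A x ((↑P : Set ℝ)ᶜ) = 0 ∧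
      ∀ p ∈ P, 0 < Gx n A x {p} := by
  classical
  have hinj : Function.Injective fun j => yj n A j x := by
    intro j j' h
    by_contra hne
    rcases Ne.lt_or_gt hne with hlt | hlt
    · exact absurd h (ne_of_lt (yj_strict hn A hlt hx hx))
    · exact absurd h.symm (ne_of_lt (yj_strict hn A hlt hx hx))
  refine ⟨Finset.image (fun j => yj n A j x) Finset.univ, ?_, ?_, ?_⟩
  · rw [Finset.card_image_of_injective _ hinj, Finset.card_univ, Fintype.card_fin]
  · have hmeas : MeasurableSet ((↑(Finset.image (fun j => yj n A j x) Finset.univ) : Set ℝ)ᶜ) :=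
      (Finset.finite_toSet _).measurableSet.compl
    simp only [Gx, Measure.smul_apply, Measure.finset_sum_apply, smul_eq_mul,
      Measure.dirac_apply' _ hmeas]
    have : ∀ j : Fin n, ((↑(Finset.image (fun j => yj n A j x) Finset.univ) : Set ℝ)ᶜ).indicator
        (1 : ℝ → ℝ≥0∞) (yj n A j x) = 0 := by
      intro j
      apply Set.indicator_of_notMem
      simp only [mem_compl_iff, Finset.coe_image, Finset.coe_univ, image_univ, not_not]
      exact mem_range_self j
    simp [this]
  · intro p hp
    obtain ⟨j0, _, hj0⟩ := Finset.mem_image.1 hp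
    have hmeas : MeasurableSet ({p} : Set ℝ) := measurableSet_singleton p
    simp only [Gx, Measure.smul_apply, Measure.finset_sum_apply, smul_eq_mul,
      Measure.dirac_apply' _ hmeas]
    apply ENNReal.mul_pos
    · exact ENNReal.inv_ne_zero.2 (ENNReal.natCast_ne_top n)
    · have hone : ({p} : Set ℝ).indicator (1 : ℝ → ℝ≥0∞) (yj n A j0 x) = 1 := by
        apply Set.indicator_of_mem
        simp [hj0]
      have hle : (1:ℝ≥0∞) ≤ ∑ j : Fin n, ({p} : Set ℝ).indicator (1 : ℝ → ℝ≥0∞)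
          (yj n A j x) := by
        rw [← hone]
        exact Finset.single_le_sum (f := fun j => ({p} : Set ℝ).indicator (1 : ℝ → ℝ≥0∞)
          (yj n A j x)) (fun j _ => zero_le) (Finset.mem_univ j0)
      exact fun h => by rw [h] at hle; exact absurd hle (by simp)

end

/-- For every pattern `A ∈ S(k)`, `k ≥ 2`, there is an `A`-avoiding
permuton whose fibers (for a disintegration along the first coordinate) are almost
all supported on exactly `k - 1` atoms. -/
theorem stmt9 (k : ℕ) (hk : 2 ≤ k) (A : Equiv.Perm (Fin k)) :
    ∃ Γ : Measure (ℝ × ℝ), IsProbabilityMeasure Γ ∧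
      (∀ B : Set ℝ, MeasurableSet B →
        Γ (B ×ˢ univ) = volume (B ∩ Icc 0 1) ∧ Γ (univ ×ˢ B) = volume (B ∩ Icc 0 1)) ∧
      Measure.pi (fun _ : Fin k => Γ) (patternSet A) = 0 ∧
      ∃ Γx : ℝ → Measure ℝ, Measurable Γx ∧
        (∀ B : Set (ℝ × ℝ), MeasurableSet B →
          Γ B = ∫⁻ x in Icc (0 : ℝ) 1, Γx x {y | (x, y) ∈ B}) ∧
        ∀ᵐ x ∂(volume.restrict (Icc (0 : ℝ) 1)),
          ∃ P : Finset ℝ, P.card = k - 1 ∧ Γx x ((↑P : Set ℝ)ᶜ) = 0 ∧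
            ∀ p ∈ P, 0 < Γx x {p} := by
  obtain ⟨n, rfl⟩ : ∃ n, k = n + 1 := ⟨k - 1, by omega⟩
  have hn : 0 < n := by omega
  refine ⟨Gam n A, Gam_prob hn A, fun B hB => ⟨Gam_marg1 hn A hB, Gam_marg2 hn A hB⟩,
    Gam_avoid hn A, Gx n A, Gx_meas n A, fun B hB => Gam_disint hn A B hB, ?_⟩
  have hIoo : ∀ᵐ x ∂(volume.restrict (Icc (0:ℝ) 1)), x ∈ Ioo (0:ℝ) 1 := by
    rw [ae_iff]
    rw [Measure.restrict_apply' measurableSet_Icc]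
    refine measure_mono_null (fun x hx => ?_) ((Set.toFinite ({0, 1} : Set ℝ)).measure_zero _)
    obtain ⟨hx1, hx2, hx3⟩ := hx
    simp only [mem_Ioo, not_and_or, not_lt] at hx1
    rcases hx1 with h | h
    · exact Or.inl (le_antisymm h hx2)
    · exact Or.inr (le_antisymm hx3 h)
  filter_upwards [hIoo] with x hx
  obtain ⟨P, hcard, hzero, hpos⟩ := fiber_atoms hn A hx
  exact ⟨P, by omega, hzero, hpos⟩
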